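/- Lemma 3 (exact remainder of the alternative representation of the target parameter): assume π_P∘V ≠ 0 μ-a.e.; π₀∘V is a version of μ[Δ | σ(V)]; g₀∘W is a version of μ[A | σ(W)]; Q₀(A,W) is a version of μ[Y | σ(A,W)]; 0 < g_P(w) < 1 for all w; m_{H,0} : 𝒱 → ℝ is measurable with (π₀·m_{H,0})∘V a version of μ[Δ·H_{g_P}(A,W)·(Y − Q_P(A,W)) | σ(V)] and m_{H,0}∘V a version of μ[H_{g_P}(A,W)·(Y − Q_P(A,W)) | σ(V)]; and for a ∈ {0,1}, m₀^{(a)} : 𝒱 → ℝ is measurable with (π₀·m₀^{(a)})∘V a version of μ[Δ·Q_P(a,W) | σ(V)] and m₀^{(a)}∘V a version of μ[Q_P(a,W) | σ(V)] (the pairs of versions coincide under coarsening at random). Then, provided all displayed integrands are integrable, ∫ [ (Δ/π_P(V))·H_{g_P}(A,W)·(Y − Q_P(A,W)) − ((Δ − π_P(V))/π_P(V))·m_{H,P}(V) + (Δ/π_P(V))·( Q_P(1,W) − Q_P(0,W) − (m_P^{(1)} − m_P^{(0)})(V) ) + (m_P^{(1)} − m_P^{(0)})(V) ] dμ − ∫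 [ Q₀(1,W) − Q₀(0,W) ] dμ = ∫ ((π_P − π₀)/π_P)(V)·(m_{H,P} − m_{H,0})(V) dμ + ∫ [ ((g_P − g₀)/g_P)(W)·(Q_P − Q₀)(1,W) + ((g_P − g₀)/(1 − g_P))(W)·(Q_P − Q₀)(0,W) ] dμ + ∫ ((π_P − π₀)/π_P)(V)·[ (m_P^{(1)} − m₀^{(1)}) − (m_P^{(0)} − m₀^{(0)}) ](V) dμ. -/

import Mathlib

open MeasureTheory Filter Topology Set

namespace ExactRemainderAux

variable {α : Type*} {m m0 : MeasurableSpace α} {μ : Measure α}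

lemma integral_mul_eq_zero (hm : m ≤ m0) [IsFiniteMeasure μ]
    {c Z : α → ℝ} (hc : StronglyMeasurable[m] c) (hZ : Integrable Z μ)
    (hcZ : Integrable (fun ω => c ω * Z ω) μ) (h0 : μ[Z|m] =ᵐ[μ] 0) :
    ∫ ω, c ω * Z ω ∂μ = 0 := by
  have hmul : μ[fun ω => c ω * Z ω|m] =ᵐ[μ] fun ω => c ω * (μ[Z|m]) ω :=
    condExp_mul_of_stronglyMeasurable_left hc hcZ hZ
  have hz : μ[fun ω => c ω * Z ω|m] =ᵐ[μ] (fun _ => (0:ℝ)) := by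
    refine hmul.trans ?_
    filter_upwards [h0] with ω h
    simp [h]
  calc ∫ ω, c ω * Z ω ∂μ = ∫ ω, (μ[fun ω => c ω * Z ω|m]) ω ∂μ := (integral_condExp hm).symm
  _ = 0 := by rw [integral_congr_ae hz]; simp

lemma trunc_term_zero (hm : m ≤ m0) [IsFiniteMeasure μ]
    {c Z : α → ℝ} (hc : Measurable[m] c) (hZ : Integrable Z μ) (h0 : μ[Z|m] =ᵐ[μ] 0)
    {s : Set α} (hs : MeasurableSet[m] s) (n : ℕ) (hbd : ∀ ω ∈ s, |c ω| ≤ n) :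
    Integrable (fun ω => s.indicator c ω * Z ω) μ ∧
      ∫ ω, s.indicator c ω * Z ω ∂μ = 0 := by
  have hc' : Measurable[m] (s.indicator c) := hc.indicator hs
  have hbd' : ∀ ω, ‖s.indicator c ω‖ ≤ n := by
    intro ω
    by_cases h : ω ∈ s
    · simpa [Set.indicator_of_mem h] using hbd ω h
    · simp [Set.indicator_of_notMem h]
  have hint : Integrable (fun ω => s.indicator c ω * Z ω) μ :=
    hZ.bdd_mul ((hc'.mono hm le_rfl).aestronglyMeasurable) (Eventually.of_forall hbd')
  exact ⟨hint, integral_mul_eq_zero hm hc'.stronglyMeasurable hZ hint h0⟩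

/-- Three zero-conditional-mean terms over one sub-σ-algebra. -/
lemma integral_sum3_eq_zero (hm : m ≤ m0) [IsFiniteMeasure μ]
    {c₁ c₂ c₃ Z₁ Z₂ Z₃ : α → ℝ}
    (hc₁ : Measurable[m] c₁) (hc₂ : Measurable[m] c₂) (hc₃ : Measurable[m] c₃)
    (hZ₁ : Integrable Z₁ μ) (hZ₂ : Integrable Z₂ μ) (hZ₃ : Integrable Z₃ μ)
    (h₁ : μ[Z₁|m] =ᵐ[μ] 0) (h₂ : μ[Z₂|m] =ᵐ[μ] 0) (h₃ : μ[Z₃|m] =ᵐ[μ] 0)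
    (hF : Integrable (fun ω => c₁ ω * Z₁ ω + c₂ ω * Z₂ ω + c₃ ω * Z₃ ω) μ) :
    ∫ ω, (c₁ ω * Z₁ ω + c₂ ω * Z₂ ω + c₃ ω * Z₃ ω) ∂μ = 0 := by
  set F : α → ℝ := fun ω => c₁ ω * Z₁ ω + c₂ ω * Z₂ ω + c₃ ω * Z₃ ω with hFdef
  set s : ℕ → Set α := fun n => {ω | |c₁ ω| ≤ n ∧ |c₂ ω| ≤ n ∧ |c₃ ω| ≤ n} with hsdef
  have hs : ∀ n, MeasurableSet[m] (s n) := fun n =>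
    @MeasurableSet.inter α m _ _ (hc₁ (measurableSet_le measurable_abs measurable_const))
      (@MeasurableSet.inter α m _ _ (hc₂ (measurableSet_le measurable_abs measurable_const))
        (hc₃ (measurableSet_le measurable_abs measurable_const)))
  have hs0 : ∀ n, MeasurableSet[m0] (s n) := fun n => hm _ (hs n)
  have k₁ := fun n => trunc_term_zero hm hc₁ hZ₁ h₁ (hs n) n (fun ω h => h.1)
  have k₂ := fun n => trunc_term_zero hm hc₂ hZ₂ h₂ (hs n) n (fun ω h => h.2.1)
  have k₃ := fun n => trunc_term_zero hm hc₃ hZ₃ h₃ (hs n) n (fun ω h => h.2.2)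
  have hsplit : ∀ n, (s n).indicator F = fun ω =>
      (s n).indicator c₁ ω * Z₁ ω + (s n).indicator c₂ ω * Z₂ ω + (s n).indicator c₃ ω * Z₃ ω := by
    intro n; funext ω
    by_cases h : ω ∈ s n <;>
      simp [Set.indicator_of_mem, Set.indicator_of_notMem, h, hFdef]
  have hInt_n : ∀ n, ∫ ω, (s n).indicator F ω ∂μ = 0 := by
    intro n
    have i12 : Integrable (fun ω => (s n).indicator c₁ ω * Z₁ ω + (s n).indicator c₂ ω * Z₂ ω) μ :=
      ((k₁ n).1).add ((k₂ n).1)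
    rw [hsplit n]
    rw [integral_add i12 (k₃ n).1, integral_add (k₁ n).1 (k₂ n).1, (k₁ n).2, (k₂ n).2, (k₃ n).2]
    ring
  have htend : Tendsto (fun n => ∫ ω, (s n).indicator F ω ∂μ) atTop (𝓝 (∫ ω, F ω ∂μ)) := by
    refine tendsto_integral_of_dominated_convergence (fun ω => ‖F ω‖)
      (fun n => hF.1.indicator (hs0 n)) hF.norm
      (fun n => Eventually.of_forall fun ω => norm_indicator_le_norm_self F ω)
      (Eventually.of_forall fun ω => ?_)
    have hev : ∀ n ≥ (⌈max |c₁ ω| (max |c₂ ω| |c₃ ω|)⌉₊), (s n).indicator F ω = F ω := by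
      intro n hn
      have hmem : ω ∈ s n := by
        have h := Nat.ceil_le.mp hn
        have h1 : |c₁ ω| ≤ (n:ℝ) := le_trans (le_max_left _ _) h
        have h2 : |c₂ ω| ≤ (n:ℝ) := le_trans (le_trans (le_max_left _ _) (le_max_right _ _)) h
        have h3 : |c₃ ω| ≤ (n:ℝ) := le_trans (le_trans (le_max_right _ _) (le_max_right _ _)) h
        exact ⟨h1, h2, h3⟩
      simp [Set.indicator_of_mem hmem]
    exact tendsto_atTop_of_eventually_const hev
  have h0 : Tendsto (fun n => ∫ ω, (s n).indicator F ω ∂μ) atTop (𝓝 0) := by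
    simpa [hInt_n] using (tendsto_const_nhds : Tendsto (fun _ : ℕ => (0:ℝ)) atTop (𝓝 0))
  exact tendsto_nhds_unique htend h0

/-- Two zero-conditional-mean terms over nested sub-σ-algebras. -/
lemma integral_sum2_nested_eq_zero {α : Type*} {mW m₂ m0 : MeasurableSpace α} {μ : Measure α}
    [IsFiniteMeasure μ] (hm2 : m₂ ≤ m0) (hW2 : mW ≤ m₂)
    {c₁ c₂ Z₁ Z₂ : α → ℝ}
    (hc₁ : Measurable[m₂] c₁) (hc₂ : Measurable[mW] c₂)
    (hZ₁ : Integrable Z₁ μ) (hZ₂ : Integrable Z₂ μ)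
    (h₁ : μ[Z₁|m₂] =ᵐ[μ] 0) (h₂ : μ[Z₂|mW] =ᵐ[μ] 0)
    (hF : Integrable (fun ω => c₁ ω * Z₁ ω + c₂ ω * Z₂ ω) μ) :
    ∫ ω, (c₁ ω * Z₁ ω + c₂ ω * Z₂ ω) ∂μ = 0 := by
  set F : α → ℝ := fun ω => c₁ ω * Z₁ ω + c₂ ω * Z₂ ω with hFdef
  set s : ℕ → Set α := fun n => {ω | |c₂ ω| ≤ n} with hsdef
  have hsW : ∀ n, MeasurableSet[mW] (s n) := fun n => hc₂ (measurableSet_le measurable_abs measurable_const)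
  have hs0 : ∀ n, MeasurableSet[m0] (s n) := fun n => (hW2.trans hm2) _ (hsW n)
  have k₂ := fun n => trunc_term_zero (hW2.trans hm2) hc₂ hZ₂ h₂ (hsW n) n (fun ω h => h)
  have k₁ : ∀ n : ℕ, Integrable (fun ω => (s n).indicator c₁ ω * Z₁ ω) μ ∧
      ∫ ω, (s n).indicator c₁ ω * Z₁ ω ∂μ = 0 := by
    intro n
    have heq : (fun ω => (s n).indicator c₁ ω * Z₁ ω)
        = fun ω => (s n).indicator F ω - (s n).indicator c₂ ω * Z₂ ω := by
      funext ω
      by_cases h : ω ∈ s n <;>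
        simp [Set.indicator_of_mem, Set.indicator_of_notMem, h, hFdef]
    have hint : Integrable (fun ω => (s n).indicator c₁ ω * Z₁ ω) μ := by
      rw [heq]; exact (hF.indicator (hs0 n)).sub (k₂ n).1
    refine ⟨hint, ?_⟩
    have hc' : Measurable[m₂] ((s n).indicator c₁) := hc₁.indicator (hW2 _ (hsW n))
    exact integral_mul_eq_zero hm2 hc'.stronglyMeasurable hZ₁ hint h₁
  have hsplit : ∀ n, (s n).indicator F = fun ω =>
      (s n).indicator c₁ ω * Z₁ ω + (s n).indicator c₂ ω * Z₂ ω := by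
    intro n; funext ω
    by_cases h : ω ∈ s n <;>
      simp [Set.indicator_of_mem, Set.indicator_of_notMem, h, hFdef]
  have hInt_n : ∀ n, ∫ ω, (s n).indicator F ω ∂μ = 0 := by
    intro n
    rw [hsplit n, integral_add (k₁ n).1 (k₂ n).1, (k₁ n).2, (k₂ n).2]
    ring
  have htend : Tendsto (fun n => ∫ ω, (s n).indicator F ω ∂μ) atTop (𝓝 (∫ ω, F ω ∂μ)) := by
    refine tendsto_integral_of_dominated_convergence (fun ω => ‖F ω‖)
      (fun n => hF.1.indicator (hs0 n)) hF.norm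
      (fun n => Eventually.of_forall fun ω => norm_indicator_le_norm_self F ω)
      (Eventually.of_forall fun ω => ?_)
    have hev : ∀ n ≥ (⌈|c₂ ω|⌉₊), (s n).indicator F ω = F ω := by
      intro n hn
      have hmem : ω ∈ s n := Nat.ceil_le.mp hn
      simp [Set.indicator_of_mem hmem]
    exact tendsto_atTop_of_eventually_const hev
  have h0 : Tendsto (fun n => ∫ ω, (s n).indicator F ω ∂μ) atTop (𝓝 0) := by
    simpa [hInt_n] using (tendsto_const_nhds : Tendsto (fun _ : ℕ => (0:ℝ)) atTop (𝓝 0))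
  exact tendsto_nhds_unique htend h0

lemma condExp_diff_zero (hm : m ≤ m0) [IsFiniteMeasure μ] {f h : α → ℝ}
    (hf : Integrable f μ) (hh : Integrable h μ) (hhm : StronglyMeasurable[m] h)
    (hver : h =ᵐ[μ] μ[f|m]) : μ[fun ω => f ω - h ω|m] =ᵐ[μ] 0 := by
  have h1 : μ[fun ω => f ω - h ω|m] =ᵐ[μ] μ[f|m] - μ[h|m] := condExp_sub hf hh _
  rw [condExp_of_stronglyMeasurable hm hhm hh] at h1
  filter_upwards [h1, hver] with ω e1 e2
  simp only [Pi.sub_apply, Pi.zero_apply] at e1 ⊢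
  rw [e1, ← e2, sub_self]

end ExactRemainderAux

/-- The ATE clever covariate `H_g(a,w) = a/g(w) − (1−a)/(1−g(w))`. -/
noncomputable def Hg {𝒲 : Type*} (g : 𝒲 → ℝ) (a : ℝ) (w : 𝒲) : ℝ :=
  a / g w - (1 - a) / (1 - g w)

section Main

open ExactRemainderAux

set_option maxHeartbeats 1000000 in
/-- Lemma 3 (exact remainder of the alternative representation of the target parameter):
`∫ [ (Δ/π_P(V))·H_{g_P}(A,W)(Y − Q_P(A,W)) − ((Δ − π_P(V))/π_P(V))·m_{H,P}(V)
   + (Δ/π_P(V))·(Q_P(1,W) − Q_P(0,W) − (m_P⁽¹⁾ − m_P⁽⁰⁾)(V)) + (m_P⁽¹⁾ − m_P⁽⁰⁾)(V) ] dμ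
 − ∫ [Q₀(1,W) − Q₀(0,W)] dμ
 = ∫ ((π_P − π₀)/π_P)(V)(m_{H,P} − m_{H,0})(V) dμ
 + ∫ [((g_P − g₀)/g_P)(W)(Q_P − Q₀)(1,W) + ((g_P − g₀)/(1 − g_P))(W)(Q_P − Q₀)(0,W)] dμ
 + ∫ ((π_P − π₀)/π_P)(V)·[(m_P⁽¹⁾ − m₀⁽¹⁾) − (m_P⁽⁰⁾ − m₀⁽⁰⁾)](V) dμ`. -/
theorem exact_remainder_alternative_representation {Ω 𝒱 𝒲 : Type*}
    {mΩ : MeasurableSpace Ω} [MeasurableSpace 𝒱] [MeasurableSpace 𝒲]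
    (μ : Measure Ω) [IsProbabilityMeasure μ]
    (V : Ω → 𝒱) (hV : Measurable V)
    (W : Ω → 𝒲) (hW : Measurable W)
    (Δ : Ω → ℝ) (hΔ : Measurable Δ) (hΔ01 : ∀ ω, Δ ω = 0 ∨ Δ ω = 1)
    (A : Ω → ℝ) (hA : Measurable A) (hA01 : ∀ ω, A ω = 0 ∨ A ω = 1)
    (Y : Ω → ℝ) (hY : Integrable Y μ)
    (πP π₀ mHP mH0 mP1 mP0 m01 m00 : 𝒱 → ℝ)
    (hπP : Measurable πP) (hπ₀ : Measurable π₀)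
    (hmHP : Measurable mHP) (hmH0 : Measurable mH0)
    (hmP1 : Measurable mP1) (hmP0 : Measurable mP0)
    (hm01 : Measurable m01) (hm00 : Measurable m00)
    (gP g₀ : 𝒲 → ℝ) (hgP : Measurable gP) (hg₀ : Measurable g₀)
    (QP Q₀ : ℝ → 𝒲 → ℝ)
    (hQP : Measurable (Function.uncurry QP)) (hQ₀ : Measurable (Function.uncurry Q₀))
    (hπPne : ∀ᵐ ω ∂μ, πP (V ω) ≠ 0)
    (hπ₀ver : (fun ω => π₀ (V ω)) =ᵐ[μ] μ[Δ | MeasurableSpace.comap V inferInstance])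
    (hg₀ver : (fun ω => g₀ (W ω)) =ᵐ[μ] μ[A | MeasurableSpace.comap W inferInstance])
    (hQ₀ver : (fun ω => Q₀ (A ω) (W ω))
      =ᵐ[μ] μ[Y | MeasurableSpace.comap (fun ω => (A ω, W ω)) inferInstance])
    (hgPbd : ∀ w, 0 < gP w ∧ gP w < 1)
    (hmH0ver : (fun ω => π₀ (V ω) * mH0 (V ω))
      =ᵐ[μ] μ[fun ω => Δ ω * (Hg gP (A ω) (W ω) * (Y ω - QP (A ω) (W ω)))
        | MeasurableSpace.comap V inferInstance])
    (hmH0ver' : (fun ω => mH0 (V ω))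
      =ᵐ[μ] μ[fun ω => Hg gP (A ω) (W ω) * (Y ω - QP (A ω) (W ω))
        | MeasurableSpace.comap V inferInstance])
    (hm01ver : (fun ω => π₀ (V ω) * m01 (V ω))
      =ᵐ[μ] μ[fun ω => Δ ω * QP 1 (W ω) | MeasurableSpace.comap V inferInstance])
    (hm01ver' : (fun ω => m01 (V ω))
      =ᵐ[μ] μ[fun ω => QP 1 (W ω) | MeasurableSpace.comap V inferInstance])
    (hm00ver : (fun ω => π₀ (V ω) * m00 (V ω))
      =ᵐ[μ] μ[fun ω => Δ ω * QP 0 (W ω) | MeasurableSpace.comap V inferInstance])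
    (hm00ver' : (fun ω => m00 (V ω))
      =ᵐ[μ] μ[fun ω => QP 0 (W ω) | MeasurableSpace.comap V inferInstance])
    (hint1 : Integrable
      (fun ω => (Δ ω / πP (V ω)) * (Hg gP (A ω) (W ω) * (Y ω - QP (A ω) (W ω)))) μ)
    (hint2 : Integrable (fun ω => ((Δ ω - πP (V ω)) / πP (V ω)) * mHP (V ω)) μ)
    (hint3 : Integrable
      (fun ω => (Δ ω / πP (V ω)) * (QP 1 (W ω) - QP 0 (W ω) - (mP1 (V ω) - mP0 (V ω)))) μ)
    (hint4 : Integrable (fun ω => mP1 (V ω) - mP0 (V ω)) μ)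
    (hint5 : Integrable (fun ω => Hg gP (A ω) (W ω) * (Y ω - QP (A ω) (W ω))) μ)
    (hint6 : Integrable (fun ω => Q₀ 1 (W ω) - Q₀ 0 (W ω)) μ)
    (hint7 : Integrable (fun ω => QP 1 (W ω) - QP 0 (W ω)) μ)
    (hint8 : Integrable (fun ω => mH0 (V ω)) μ)
    (hint9 : Integrable
      (fun ω => ((πP (V ω) - π₀ (V ω)) / πP (V ω)) * (mHP (V ω) - mH0 (V ω))) μ)
    (hint10 : Integrable
      (fun ω => ((gP (W ω) - g₀ (W ω)) / gP (W ω)) * (QP 1 (W ω) - Q₀ 1 (W ω))) μ)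
    (hint11 : Integrable
      (fun ω => ((gP (W ω) - g₀ (W ω)) / (1 - gP (W ω))) * (QP 0 (W ω) - Q₀ 0 (W ω))) μ)
    (hint12 : Integrable
      (fun ω => ((πP (V ω) - π₀ (V ω)) / πP (V ω))
        * ((mP1 (V ω) - m01 (V ω)) - (mP0 (V ω) - m00 (V ω)))) μ) :
    (∫ ω, ((Δ ω / πP (V ω)) * (Hg gP (A ω) (W ω) * (Y ω - QP (A ω) (W ω)))
        - ((Δ ω - πP (V ω)) / πP (V ω)) * mHP (V ω)
        + (Δ ω / πP (V ω)) * (QP 1 (W ω) - QP 0 (W ω) - (mP1 (V ω) - mP0 (V ω)))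
        + (mP1 (V ω) - mP0 (V ω))) ∂μ)
      - ∫ ω, (Q₀ 1 (W ω) - Q₀ 0 (W ω)) ∂μ
    = (∫ ω, ((πP (V ω) - π₀ (V ω)) / πP (V ω)) * (mHP (V ω) - mH0 (V ω)) ∂μ)
      + (∫ ω, (((gP (W ω) - g₀ (W ω)) / gP (W ω)) * (QP 1 (W ω) - Q₀ 1 (W ω))
          + ((gP (W ω) - g₀ (W ω)) / (1 - gP (W ω))) * (QP 0 (W ω) - Q₀ 0 (W ω))) ∂μ)
      + ∫ ω, ((πP (V ω) - π₀ (V ω)) / πP (V ω))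
          * ((mP1 (V ω) - m01 (V ω)) - (mP0 (V ω) - m00 (V ω))) ∂μ := by
  -- σ-algebras
  have hmV : MeasurableSpace.comap V inferInstance ≤ mΩ := hV.comap_le
  have hmW : MeasurableSpace.comap W inferInstance ≤ mΩ := hW.comap_le
  have hAW : Measurable fun ω => (A ω, W ω) := hA.prodMk hW
  have hm2 : MeasurableSpace.comap (fun ω => (A ω, W ω)) inferInstance ≤ mΩ := hAW.comap_le
  have hW2 : (MeasurableSpace.comap W inferInstance : MeasurableSpace Ω) ≤ MeasurableSpace.comap (fun ω => (A ω, W ω)) inferInstance := by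
    intro t ht
    obtain ⟨s, hs, rfl⟩ := ht
    exact ⟨Prod.snd ⁻¹' s, measurable_snd hs, rfl⟩
  have hVm : Measurable[MeasurableSpace.comap V inferInstance] V := fun s hs => ⟨s, hs, rfl⟩
  have hPm : Measurable[MeasurableSpace.comap (fun ω => (A ω, W ω)) inferInstance] (fun ω => (A ω, W ω)) := fun s hs => ⟨s, hs, rfl⟩
  have hWm : Measurable[MeasurableSpace.comap W inferInstance] W := fun s hs => ⟨s, hs, rfl⟩
  -- boundedness facts
  have hΔb : ∀ ω, ‖Δ ω‖ ≤ 1 := by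
    intro ω; rcases hΔ01 ω with h | h <;> simp [h]
  have hAb : ∀ ω, ‖A ω‖ ≤ 1 := by
    intro ω; rcases hA01 ω with h | h <;> simp [h]
  have iΔ : Integrable Δ μ :=
    (integrable_const (1:ℝ)).mono' hΔ.aestronglyMeasurable (Filter.Eventually.of_forall hΔb)
  have iA : Integrable A μ :=
    (integrable_const (1:ℝ)).mono' hA.aestronglyMeasurable (Filter.Eventually.of_forall hAb)
  have iπ₀V : Integrable (fun ω => π₀ (V ω)) μ := integrable_condExp.congr hπ₀ver.symm
  have ig₀W : Integrable (fun ω => g₀ (W ω)) μ := integrable_condExp.congr hg₀ver.symm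
  have hπ₀01 : ∀ᵐ ω ∂μ, 0 ≤ π₀ (V ω) ∧ π₀ (V ω) ≤ 1 := by
    have h0 : (0:Ω → ℝ) ≤ᵐ[μ] μ[Δ | MeasurableSpace.comap V inferInstance] :=
      condExp_nonneg (Filter.Eventually.of_forall fun ω => by
        rcases hΔ01 ω with h | h <;> simp [h])
    have h1 : μ[Δ | MeasurableSpace.comap V inferInstance] ≤ᵐ[μ] μ[(fun _ => (1:ℝ)) | MeasurableSpace.comap V inferInstance] :=
      condExp_mono iΔ (integrable_const 1) (Filter.Eventually.of_forall fun ω => by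
        rcases hΔ01 ω with h | h <;> simp [h])
    rw [condExp_const hmV (1:ℝ)] at h1
    filter_upwards [h0, h1, hπ₀ver] with ω e0 e1 e2
    constructor
    · rw [e2]; exact e0
    · rw [e2]; exact e1

  -- measurability helpers
  have hgPW : Measurable fun ω => gP (W ω) := hgP.comp hW
  have hHp : Measurable fun p : ℝ × 𝒲 => Hg gP p.1 p.2 := by
    unfold Hg
    exact (measurable_fst.div (hgP.comp measurable_snd)).sub
      ((measurable_const.sub measurable_fst).div
        (measurable_const.sub (hgP.comp measurable_snd)))
  have hH : Measurable fun ω => Hg gP (A ω) (W ω) := hHp.comp hAW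
  have hQPa : Measurable fun ω => QP (A ω) (W ω) := hQP.comp hAW
  have hQP1 : Measurable fun w => QP 1 w := hQP.comp (measurable_const.prodMk measurable_id)
  have hQP0 : Measurable fun w => QP 0 w := hQP.comp (measurable_const.prodMk measurable_id)
  have hQ01 : Measurable fun w => Q₀ 1 w := hQ₀.comp (measurable_const.prodMk measurable_id)
  have hQ00 : Measurable fun w => Q₀ 0 w := hQ₀.comp (measurable_const.prodMk measurable_id)
  have hQP1W : Measurable fun ω => QP 1 (W ω) := hQP1.comp hW
  have hQP0W : Measurable fun ω => QP 0 (W ω) := hQP0.comp hW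
  have hQ01W : Measurable fun ω => Q₀ 1 (W ω) := hQ01.comp hW
  have hQ00W : Measurable fun ω => Q₀ 0 (W ω) := hQ00.comp hW
  -- basic integrability
  have iQa : Integrable (fun ω => Q₀ (A ω) (W ω)) μ := integrable_condExp.congr hQ₀ver.symm
  have iA6 : Integrable (fun ω => A ω * (Q₀ 1 (W ω) - Q₀ 0 (W ω))) μ :=
    hint6.bdd_mul hA.aestronglyMeasurable (Filter.Eventually.of_forall hAb)
  have iQ00W : Integrable (fun ω => Q₀ 0 (W ω)) μ := by
    refine (iQa.sub iA6).congr (Filter.Eventually.of_forall fun ω => ?_)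
    rcases hA01 ω with h | h <;> simp [h]
  have iQ01W : Integrable (fun ω => Q₀ 1 (W ω)) μ :=
    (iQ00W.add hint6).congr (Filter.Eventually.of_forall fun ω => by
      simp only [Pi.add_apply]; ring)
  have iAh5 : Integrable (fun ω => A ω * (Hg gP (A ω) (W ω) * (Y ω - QP (A ω) (W ω)))) μ :=
    hint5.bdd_mul hA.aestronglyMeasurable (Filter.Eventually.of_forall hAb)
  have eAh5 : ∀ ω, A ω * (Hg gP (A ω) (W ω) * (Y ω - QP (A ω) (W ω)))
      = (1 / gP (W ω)) * (A ω * (Y ω - QP 1 (W ω))) := by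
    intro ω
    have h1 : gP (W ω) ≠ 0 := (hgPbd (W ω)).1.ne'
    rcases hA01 ω with h | h <;> simp [h, Hg] <;> field_simp
  have eAY1 : ∀ ω, A ω * (Y ω - QP 1 (W ω))
      = gP (W ω) * (A ω * (Hg gP (A ω) (W ω) * (Y ω - QP (A ω) (W ω)))) := by
    intro ω
    have h1 : gP (W ω) ≠ 0 := (hgPbd (W ω)).1.ne'
    rw [eAh5 ω]
    field_simp
  have iAYQP1 : Integrable (fun ω => A ω * (Y ω - QP 1 (W ω))) μ := by
    have h : Integrable (fun ω => gP (W ω)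
        * (A ω * (Hg gP (A ω) (W ω) * (Y ω - QP (A ω) (W ω))))) μ :=
      iAh5.bdd_mul hgPW.aestronglyMeasurable (Filter.Eventually.of_forall fun ω => by
        have h2 := hgPbd (W ω)
        rw [Real.norm_eq_abs, abs_of_pos h2.1]
        exact h2.2.le)
    exact h.congr (Filter.Eventually.of_forall fun ω => (eAY1 ω).symm)
  have iAY : Integrable (fun ω => A ω * Y ω) μ :=
    hY.bdd_mul hA.aestronglyMeasurable (Filter.Eventually.of_forall hAb)
  have iAQP1 : Integrable (fun ω => A ω * QP 1 (W ω)) μ :=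
    (iAY.sub iAYQP1).congr (Filter.Eventually.of_forall fun ω => by
      simp only [Pi.sub_apply]; ring)
  have iAQ01 : Integrable (fun ω => A ω * Q₀ 1 (W ω)) μ :=
    iQ01W.bdd_mul hA.aestronglyMeasurable (Filter.Eventually.of_forall hAb)

  -- conditional expectation chain on W-side (arm 1)
  have hAm2 : Measurable[MeasurableSpace.comap (fun ω => (A ω, W ω)) inferInstance] A :=
    measurable_fst.comp hPm
  have hQam2 : Measurable[MeasurableSpace.comap (fun ω => (A ω, W ω)) inferInstance]
      (fun ω => Q₀ (A ω) (W ω)) := hQ₀.comp hPm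
  have cAY2 : μ[(fun ω => A ω * Y ω) | MeasurableSpace.comap (fun ω => (A ω, W ω)) inferInstance]
      =ᵐ[μ] fun ω => A ω * Q₀ 1 (W ω) := by
    refine (condExp_mul_of_stronglyMeasurable_left hAm2.stronglyMeasurable iAY hY).trans ?_
    filter_upwards [hQ₀ver] with ω e
    simp only [Pi.mul_apply]
    rw [← e]
    rcases hA01 ω with h | h <;> simp [h]
  have cAYW : μ[(fun ω => A ω * Y ω) | MeasurableSpace.comap W inferInstance]
      =ᵐ[μ] μ[(fun ω => Q₀ 1 (W ω) * A ω) | MeasurableSpace.comap W inferInstance] :=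
    (condExp_condExp_of_le hW2 hm2).symm.trans
      ((condExp_congr_ae cAY2).trans (condExp_congr_ae
        (Filter.Eventually.of_forall fun ω => mul_comm (A ω) (Q₀ 1 (W ω)))))
  have cAQ01W : μ[(fun ω => Q₀ 1 (W ω) * A ω) | MeasurableSpace.comap W inferInstance]
      =ᵐ[μ] fun ω => Q₀ 1 (W ω) * g₀ (W ω) := by
    refine (condExp_mul_of_stronglyMeasurable_left ((hQ01.comp hWm).stronglyMeasurable)
      (iAQ01.congr (Filter.Eventually.of_forall fun ω => mul_comm _ _)) iA).trans ?_
    filter_upwards [hg₀ver] with ω e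
    simp only [Pi.mul_apply, Function.comp_apply]
    rw [← e]
  have cAQP1W : μ[(fun ω => QP 1 (W ω) * A ω) | MeasurableSpace.comap W inferInstance]
      =ᵐ[μ] fun ω => QP 1 (W ω) * g₀ (W ω) := by
    refine (condExp_mul_of_stronglyMeasurable_left ((hQP1.comp hWm).stronglyMeasurable)
      (iAQP1.congr (Filter.Eventually.of_forall fun ω => mul_comm _ _)) iA).trans ?_
    filter_upwards [hg₀ver] with ω e
    simp only [Pi.mul_apply, Function.comp_apply]
    rw [← e]
  have cAYQP1W : μ[(fun ω => A ω * (Y ω - QP 1 (W ω))) | MeasurableSpace.comap W inferInstance]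
      =ᵐ[μ] fun ω => g₀ (W ω) * (Q₀ 1 (W ω) - QP 1 (W ω)) := by
    have e : (fun ω => A ω * (Y ω - QP 1 (W ω)))
        = fun ω => A ω * Y ω - QP 1 (W ω) * A ω := by
      funext ω; ring
    rw [e]
    refine (condExp_sub iAY (iAQP1.congr
      (Filter.Eventually.of_forall fun ω => mul_comm _ _)) _).trans ?_
    filter_upwards [cAYW, cAQ01W, cAQP1W] with ω e1 e2 e3
    simp only [Pi.sub_apply]
    rw [e1, e2, e3]
    ring
  have iX1 : Integrable (fun ω => (1 / gP (W ω)) * (A ω * (Y ω - QP 1 (W ω)))) μ :=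
    iAh5.congr (Filter.Eventually.of_forall eAh5)
  have cX1 : μ[(fun ω => (1 / gP (W ω)) * (A ω * (Y ω - QP 1 (W ω))))
        | MeasurableSpace.comap W inferInstance]
      =ᵐ[μ] fun ω => (1 / gP (W ω)) * (g₀ (W ω) * (Q₀ 1 (W ω) - QP 1 (W ω))) := by
    refine (condExp_mul_of_stronglyMeasurable_left
      (((measurable_const.div hgP).comp hWm).stronglyMeasurable) iX1 iAYQP1).trans ?_
    filter_upwards [cAYQP1W] with ω e
    simp only [Pi.mul_apply, Function.comp_apply]
    rw [e]; rfl
  have iJ1 : Integrable (fun ω => (1 / gP (W ω)) * (g₀ (W ω) * (Q₀ 1 (W ω) - QP 1 (W ω)))) μ :=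
    integrable_condExp.congr cX1
  have iu1 : Integrable (fun ω => QP 1 (W ω) - Q₀ 1 (W ω)) μ := by
    refine Integrable.mono' (hint10.abs.add iJ1.abs)
      ((hQP1W.sub hQ01W).aestronglyMeasurable)
      (Filter.Eventually.of_forall fun ω => ?_)
    have hg1 : gP (W ω) ≠ 0 := (hgPbd (W ω)).1.ne'
    have e : QP 1 (W ω) - Q₀ 1 (W ω)
        = ((gP (W ω) - g₀ (W ω)) / gP (W ω)) * (QP 1 (W ω) - Q₀ 1 (W ω))
          + -((1 / gP (W ω)) * (g₀ (W ω) * (Q₀ 1 (W ω) - QP 1 (W ω)))) := by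
      field_simp
      ring
    rw [Real.norm_eq_abs, e]
    simp only [Pi.add_apply]
    exact (abs_add_le _ _).trans (by rw [abs_neg])
  have iQP1W : Integrable (fun ω => QP 1 (W ω)) μ :=
    (iu1.add iQ01W).congr (Filter.Eventually.of_forall fun ω => by
      simp only [Pi.add_apply]; ring)

  -- conditional expectation chain on W-side (arm 0)
  have hBb : ∀ ω, ‖1 - A ω‖ ≤ 1 := by
    intro ω; rcases hA01 ω with h | h <;> simp [h]
  have iB : Integrable (fun ω => 1 - A ω) μ := (integrable_const (1:ℝ)).sub iA
  have iBh5 : Integrable (fun ω => (1 - A ω) * (Hg gP (A ω) (W ω) * (Y ω - QP (A ω) (W ω)))) μ :=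
    hint5.bdd_mul (measurable_const.sub hA).aestronglyMeasurable
      (Filter.Eventually.of_forall hBb)
  have eBh5 : ∀ ω, (1 - A ω) * (Hg gP (A ω) (W ω) * (Y ω - QP (A ω) (W ω)))
      = -((1 / (1 - gP (W ω))) * ((1 - A ω) * (Y ω - QP 0 (W ω)))) := by
    intro ω
    have h2 : (1:ℝ) - gP (W ω) ≠ 0 := ne_of_gt (by linarith [(hgPbd (W ω)).2])
    rcases hA01 ω with h | h <;> simp [h, Hg] <;> field_simp
  have eBY0 : ∀ ω, (1 - A ω) * (Y ω - QP 0 (W ω))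
      = -((1 - gP (W ω)) * ((1 - A ω) * (Hg gP (A ω) (W ω) * (Y ω - QP (A ω) (W ω))))) := by
    intro ω
    have h2 : (1:ℝ) - gP (W ω) ≠ 0 := ne_of_gt (by linarith [(hgPbd (W ω)).2])
    rw [eBh5 ω]
    field_simp
  have iBYQP0 : Integrable (fun ω => (1 - A ω) * (Y ω - QP 0 (W ω))) μ := by
    have h : Integrable (fun ω => (1 - gP (W ω))
        * ((1 - A ω) * (Hg gP (A ω) (W ω) * (Y ω - QP (A ω) (W ω))))) μ :=
      iBh5.bdd_mul (measurable_const.sub hgPW).aestronglyMeasurable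
        (Filter.Eventually.of_forall fun ω => by
          have h2 := hgPbd (W ω)
          rw [Real.norm_eq_abs, abs_of_pos (by linarith [h2.2] : (0:ℝ) < 1 - gP (W ω))]
          exact sub_le_self 1 h2.1.le)
    exact h.neg.congr (Filter.Eventually.of_forall fun ω => by
      simp only [Pi.neg_apply]
      rw [← eBY0 ω])
  have iBY : Integrable (fun ω => (1 - A ω) * Y ω) μ :=
    hY.bdd_mul (measurable_const.sub hA).aestronglyMeasurable
      (Filter.Eventually.of_forall hBb)
  have iBQP0 : Integrable (fun ω => (1 - A ω) * QP 0 (W ω)) μ :=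
    (iBY.sub iBYQP0).congr (Filter.Eventually.of_forall fun ω => by
      simp only [Pi.sub_apply]; ring)
  have iBQ00 : Integrable (fun ω => (1 - A ω) * Q₀ 0 (W ω)) μ :=
    iQ00W.bdd_mul (measurable_const.sub hA).aestronglyMeasurable
      (Filter.Eventually.of_forall hBb)
  have hBm2 : Measurable[MeasurableSpace.comap (fun ω => (A ω, W ω)) inferInstance]
      (fun ω => 1 - A ω) := measurable_const.sub hAm2
  have cBW : μ[(fun ω => 1 - A ω) | MeasurableSpace.comap W inferInstance]
      =ᵐ[μ] fun ω => 1 - g₀ (W ω) := by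
    refine (condExp_sub (integrable_const 1) iA _).trans ?_
    have hc := condExp_const hmW (1:ℝ) (μ := μ)
    filter_upwards [hg₀ver] with ω e
    simp only [Pi.sub_apply, hc]
    rw [← e]
  have cBY2 : μ[(fun ω => (1 - A ω) * Y ω)
        | MeasurableSpace.comap (fun ω => (A ω, W ω)) inferInstance]
      =ᵐ[μ] fun ω => (1 - A ω) * Q₀ 0 (W ω) := by
    refine (condExp_mul_of_stronglyMeasurable_left hBm2.stronglyMeasurable iBY hY).trans ?_
    filter_upwards [hQ₀ver] with ω e
    simp only [Pi.mul_apply]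
    rw [← e]
    rcases hA01 ω with h | h <;> simp [h]
  have cBYW : μ[(fun ω => (1 - A ω) * Y ω) | MeasurableSpace.comap W inferInstance]
      =ᵐ[μ] μ[(fun ω => Q₀ 0 (W ω) * (1 - A ω)) | MeasurableSpace.comap W inferInstance] :=
    (condExp_condExp_of_le hW2 hm2).symm.trans
      ((condExp_congr_ae cBY2).trans (condExp_congr_ae
        (Filter.Eventually.of_forall fun ω => mul_comm (1 - A ω) (Q₀ 0 (W ω)))))
  have cBQ00W : μ[(fun ω => Q₀ 0 (W ω) * (1 - A ω)) | MeasurableSpace.comap W inferInstance]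
      =ᵐ[μ] fun ω => Q₀ 0 (W ω) * (1 - g₀ (W ω)) := by
    refine (condExp_mul_of_stronglyMeasurable_left ((hQ00.comp hWm).stronglyMeasurable)
      (iBQ00.congr (Filter.Eventually.of_forall fun ω => mul_comm _ _)) iB).trans ?_
    filter_upwards [cBW] with ω e
    simp only [Pi.mul_apply, Function.comp_apply]
    rw [e]
  have cBQP0W : μ[(fun ω => QP 0 (W ω) * (1 - A ω)) | MeasurableSpace.comap W inferInstance]
      =ᵐ[μ] fun ω => QP 0 (W ω) * (1 - g₀ (W ω)) := by
    refine (condExp_mul_of_stronglyMeasurable_left ((hQP0.comp hWm).stronglyMeasurable)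
      (iBQP0.congr (Filter.Eventually.of_forall fun ω => mul_comm _ _)) iB).trans ?_
    filter_upwards [cBW] with ω e
    simp only [Pi.mul_apply, Function.comp_apply]
    rw [e]
  have cBYQP0W : μ[(fun ω => (1 - A ω) * (Y ω - QP 0 (W ω)))
        | MeasurableSpace.comap W inferInstance]
      =ᵐ[μ] fun ω => (1 - g₀ (W ω)) * (Q₀ 0 (W ω) - QP 0 (W ω)) := by
    have e : (fun ω => (1 - A ω) * (Y ω - QP 0 (W ω)))
        = fun ω => (1 - A ω) * Y ω - QP 0 (W ω) * (1 - A ω) := by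
      funext ω; ring
    rw [e]
    refine (condExp_sub iBY (iBQP0.congr
      (Filter.Eventually.of_forall fun ω => mul_comm _ _)) _).trans ?_
    filter_upwards [cBYW, cBQ00W, cBQP0W] with ω e1 e2 e3
    simp only [Pi.sub_apply]
    rw [e1, e2, e3]
    ring
  have iX0 : Integrable (fun ω => (1 / (1 - gP (W ω))) * ((1 - A ω) * (Y ω - QP 0 (W ω)))) μ :=
    iBh5.neg.congr (Filter.Eventually.of_forall fun ω => by
      simp only [Pi.neg_apply]
      rw [eBh5 ω, neg_neg])
  have cX0 : μ[(fun ω => (1 / (1 - gP (W ω))) * ((1 - A ω) * (Y ω - QP 0 (W ω))))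
        | MeasurableSpace.comap W inferInstance]
      =ᵐ[μ] fun ω => (1 / (1 - gP (W ω))) * ((1 - g₀ (W ω)) * (Q₀ 0 (W ω) - QP 0 (W ω))) := by
    refine (condExp_mul_of_stronglyMeasurable_left
      (((measurable_const.div (measurable_const.sub hgP)).comp hWm).stronglyMeasurable)
      iX0 iBYQP0).trans ?_
    filter_upwards [cBYQP0W] with ω e
    simp only [Pi.mul_apply, Function.comp_apply]
    rw [e]; rfl
  have iJ0 : Integrable
      (fun ω => (1 / (1 - gP (W ω))) * ((1 - g₀ (W ω)) * (Q₀ 0 (W ω) - QP 0 (W ω)))) μ :=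
    integrable_condExp.congr cX0
  have iu0 : Integrable (fun ω => QP 0 (W ω) - Q₀ 0 (W ω)) μ := by
    refine Integrable.mono' (hint11.abs.add iJ0.abs)
      ((hQP0W.sub hQ00W).aestronglyMeasurable)
      (Filter.Eventually.of_forall fun ω => ?_)
    have h2 : (1:ℝ) - gP (W ω) ≠ 0 := ne_of_gt (by linarith [(hgPbd (W ω)).2])
    have e : QP 0 (W ω) - Q₀ 0 (W ω)
        = -(((gP (W ω) - g₀ (W ω)) / (1 - gP (W ω))) * (QP 0 (W ω) - Q₀ 0 (W ω)))
          + -((1 / (1 - gP (W ω))) * ((1 - g₀ (W ω)) * (Q₀ 0 (W ω) - QP 0 (W ω)))) := by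
      field_simp
      ring
    rw [Real.norm_eq_abs, e]
    simp only [Pi.add_apply]
    exact (abs_add_le _ _).trans (by rw [abs_neg, abs_neg])
  have iQP0W : Integrable (fun ω => QP 0 (W ω)) μ :=
    (iu0.add iQ00W).congr (Filter.Eventually.of_forall fun ω => by
      simp only [Pi.add_apply]; ring)

  -- σ(V)-level integrability and conditional expectations
  have iΔh5 : Integrable (fun ω => Δ ω * (Hg gP (A ω) (W ω) * (Y ω - QP (A ω) (W ω)))) μ :=
    hint5.bdd_mul hΔ.aestronglyMeasurable (Filter.Eventually.of_forall hΔb)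
  have iπ₀mH0V : Integrable (fun ω => π₀ (V ω) * mH0 (V ω)) μ :=
    integrable_condExp.congr hmH0ver.symm
  have iΔQP1 : Integrable (fun ω => Δ ω * QP 1 (W ω)) μ :=
    iQP1W.bdd_mul hΔ.aestronglyMeasurable (Filter.Eventually.of_forall hΔb)
  have iΔQP0 : Integrable (fun ω => Δ ω * QP 0 (W ω)) μ :=
    iQP0W.bdd_mul hΔ.aestronglyMeasurable (Filter.Eventually.of_forall hΔb)
  have iΔq : Integrable (fun ω => Δ ω * (QP 1 (W ω) - QP 0 (W ω))) μ :=
    hint7.bdd_mul hΔ.aestronglyMeasurable (Filter.Eventually.of_forall hΔb)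
  have hπ₀b : ∀ᵐ ω ∂μ, ‖π₀ (V ω)‖ ≤ 1 := by
    filter_upwards [hπ₀01] with ω h
    rw [Real.norm_eq_abs, abs_le]
    exact ⟨by linarith [h.1], h.2⟩
  have iπ₀q : Integrable (fun ω => π₀ (V ω) * (QP 1 (W ω) - QP 0 (W ω))) μ :=
    hint7.bdd_mul (hπ₀.comp hV).aestronglyMeasurable hπ₀b
  have iπ₀D : Integrable (fun ω => π₀ (V ω) * (mP1 (V ω) - mP0 (V ω))) μ :=
    hint4.bdd_mul (hπ₀.comp hV).aestronglyMeasurable hπ₀b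
  have iDΔ : Integrable (fun ω => (mP1 (V ω) - mP0 (V ω)) * Δ ω) μ :=
    (hint4.bdd_mul hΔ.aestronglyMeasurable (Filter.Eventually.of_forall hΔb)).congr
      (Filter.Eventually.of_forall fun ω => mul_comm _ _)
  have im01V : Integrable (fun ω => m01 (V ω)) μ := integrable_condExp.congr hm01ver'.symm
  have im00V : Integrable (fun ω => m00 (V ω)) μ := integrable_condExp.congr hm00ver'.symm
  have id0V : Integrable (fun ω => m01 (V ω) - m00 (V ω)) μ := im01V.sub im00V
  have cZ2 : μ[(fun ω => Δ ω - π₀ (V ω)) | MeasurableSpace.comap V inferInstance] =ᵐ[μ] 0 :=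
    condExp_diff_zero hmV iΔ iπ₀V ((hπ₀.comp hVm).stronglyMeasurable) hπ₀ver
  have cZ1 : μ[(fun ω => Δ ω * (Hg gP (A ω) (W ω) * (Y ω - QP (A ω) (W ω)))
        - π₀ (V ω) * mH0 (V ω)) | MeasurableSpace.comap V inferInstance] =ᵐ[μ] 0 :=
    condExp_diff_zero hmV iΔh5 iπ₀mH0V
      (((hπ₀.mul hmH0).comp hVm).stronglyMeasurable) hmH0ver
  have cZ3 : μ[(fun ω => Hg gP (A ω) (W ω) * (Y ω - QP (A ω) (W ω))
        - mH0 (V ω)) | MeasurableSpace.comap V inferInstance] =ᵐ[μ] 0 :=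
    condExp_diff_zero hmV hint5 hint8 ((hmH0.comp hVm).stronglyMeasurable) hmH0ver'
  have cq : μ[(fun ω => QP 1 (W ω) - QP 0 (W ω)) | MeasurableSpace.comap V inferInstance]
      =ᵐ[μ] fun ω => m01 (V ω) - m00 (V ω) := by
    refine (condExp_sub iQP1W iQP0W _).trans ?_
    filter_upwards [hm01ver', hm00ver'] with ω e1 e2
    simp only [Pi.sub_apply]
    rw [← e1, ← e2]
  have cZ5 : μ[(fun ω => (QP 1 (W ω) - QP 0 (W ω)) - (m01 (V ω) - m00 (V ω)))
        | MeasurableSpace.comap V inferInstance] =ᵐ[μ] 0 :=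
    condExp_diff_zero hmV hint7 id0V
      (((hm01.sub hm00).comp hVm).stronglyMeasurable) cq.symm
  have cΔq : μ[(fun ω => Δ ω * (QP 1 (W ω) - QP 0 (W ω))) | MeasurableSpace.comap V inferInstance]
      =ᵐ[μ] fun ω => π₀ (V ω) * m01 (V ω) - π₀ (V ω) * m00 (V ω) := by
    have e : (fun ω => Δ ω * (QP 1 (W ω) - QP 0 (W ω)))
        = fun ω => Δ ω * QP 1 (W ω) - Δ ω * QP 0 (W ω) := by funext ω; ring
    rw [e]
    refine (condExp_sub iΔQP1 iΔQP0 _).trans ?_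
    filter_upwards [hm01ver, hm00ver] with ω e1 e2
    simp only [Pi.sub_apply]
    rw [← e1, ← e2]
  have cπ₀q : μ[(fun ω => π₀ (V ω) * (QP 1 (W ω) - QP 0 (W ω)))
        | MeasurableSpace.comap V inferInstance]
      =ᵐ[μ] fun ω => π₀ (V ω) * (m01 (V ω) - m00 (V ω)) := by
    refine (condExp_mul_of_stronglyMeasurable_left ((hπ₀.comp hVm).stronglyMeasurable)
      iπ₀q hint7).trans ?_
    filter_upwards [cq] with ω e
    simp only [Pi.mul_apply, Function.comp_apply]
    rw [e]
  have cDΔ : μ[(fun ω => (mP1 (V ω) - mP0 (V ω)) * Δ ω) | MeasurableSpace.comap V inferInstance]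
      =ᵐ[μ] fun ω => (mP1 (V ω) - mP0 (V ω)) * π₀ (V ω) := by
    refine (condExp_mul_of_stronglyMeasurable_left (((hmP1.sub hmP0).comp hVm).stronglyMeasurable)
      iDΔ iΔ).trans ?_
    filter_upwards [hπ₀ver] with ω e
    simp only [Pi.mul_apply, Function.comp_apply]
    rw [← e]; rfl
  have cπ₀D : μ[(fun ω => π₀ (V ω) * (mP1 (V ω) - mP0 (V ω)))
        | MeasurableSpace.comap V inferInstance]
      = fun ω => π₀ (V ω) * (mP1 (V ω) - mP0 (V ω)) :=
    condExp_of_stronglyMeasurable hmV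
      (((hπ₀.mul (hmP1.sub hmP0)).comp hVm).stronglyMeasurable) iπ₀D
  have cZ4 : μ[(fun ω => (Δ ω - π₀ (V ω))
        * (QP 1 (W ω) - QP 0 (W ω) - (mP1 (V ω) - mP0 (V ω))))
        | MeasurableSpace.comap V inferInstance] =ᵐ[μ] 0 := by
    have e : (fun ω => (Δ ω - π₀ (V ω)) * (QP 1 (W ω) - QP 0 (W ω) - (mP1 (V ω) - mP0 (V ω))))
        = fun ω => (Δ ω * (QP 1 (W ω) - QP 0 (W ω)) - (mP1 (V ω) - mP0 (V ω)) * Δ ω)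
          - (π₀ (V ω) * (QP 1 (W ω) - QP 0 (W ω)) - π₀ (V ω) * (mP1 (V ω) - mP0 (V ω))) := by
      funext ω; ring
    rw [e]
    have s1 : Integrable (fun ω => Δ ω * (QP 1 (W ω) - QP 0 (W ω))
        - (mP1 (V ω) - mP0 (V ω)) * Δ ω) μ := iΔq.sub iDΔ
    have s2 : Integrable (fun ω => π₀ (V ω) * (QP 1 (W ω) - QP 0 (W ω))
        - π₀ (V ω) * (mP1 (V ω) - mP0 (V ω))) μ := iπ₀q.sub iπ₀D
    refine (condExp_sub s1 s2 _).trans ?_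
    have t1 : μ[(fun ω => Δ ω * (QP 1 (W ω) - QP 0 (W ω)) - (mP1 (V ω) - mP0 (V ω)) * Δ ω)
          | MeasurableSpace.comap V inferInstance]
        =ᵐ[μ] μ[(fun ω => Δ ω * (QP 1 (W ω) - QP 0 (W ω)))
            | MeasurableSpace.comap V inferInstance]
          - μ[(fun ω => (mP1 (V ω) - mP0 (V ω)) * Δ ω)
            | MeasurableSpace.comap V inferInstance] := condExp_sub iΔq iDΔ _
    have t2 : μ[(fun ω => π₀ (V ω) * (QP 1 (W ω) - QP 0 (W ω))
            - π₀ (V ω) * (mP1 (V ω) - mP0 (V ω))) | MeasurableSpace.comap V inferInstance]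
        =ᵐ[μ] μ[(fun ω => π₀ (V ω) * (QP 1 (W ω) - QP 0 (W ω)))
            | MeasurableSpace.comap V inferInstance]
          - μ[(fun ω => π₀ (V ω) * (mP1 (V ω) - mP0 (V ω)))
            | MeasurableSpace.comap V inferInstance] := condExp_sub iπ₀q iπ₀D _
    filter_upwards [t1, t2, cΔq, cπ₀q, cDΔ] with ω e1 e2 e3 e4 e5
    simp only [Pi.sub_apply, Pi.zero_apply] at *
    rw [e1, e2, e3, e4, e5, cπ₀D]
    ring

  -- Group 1
  have hc11 : Measurable[MeasurableSpace.comap V inferInstance] (fun ω => 1 / πP (V ω)) :=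
    (measurable_const.div hπP).comp hVm
  have hc12 : Measurable[MeasurableSpace.comap V inferInstance]
      (fun ω => -(mHP (V ω) / πP (V ω))) := ((hmHP.div hπP).neg).comp hVm
  have hc13 : Measurable[MeasurableSpace.comap V inferInstance] (fun _ : Ω => (-1 : ℝ)) :=
    measurable_const
  have iZ1 : Integrable (fun ω => Δ ω * (Hg gP (A ω) (W ω) * (Y ω - QP (A ω) (W ω)))
      - π₀ (V ω) * mH0 (V ω)) μ := iΔh5.sub iπ₀mH0V
  have iZ2 : Integrable (fun ω => Δ ω - π₀ (V ω)) μ := iΔ.sub iπ₀V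
  have iZ3 : Integrable (fun ω => Hg gP (A ω) (W ω) * (Y ω - QP (A ω) (W ω)) - mH0 (V ω)) μ :=
    hint5.sub hint8
  have eG1 : (fun ω => (Δ ω / πP (V ω)) * (Hg gP (A ω) (W ω) * (Y ω - QP (A ω) (W ω))) - ((Δ ω - πP (V ω)) / πP (V ω)) * mHP (V ω) - ((πP (V ω) - π₀ (V ω)) / πP (V ω)) * (mHP (V ω) - mH0 (V ω)) - (Hg gP (A ω) (W ω) * (Y ω - QP (A ω) (W ω)))) =ᵐ[μ] (fun ω => (1 / πP (V ω)) * (Δ ω * (Hg gP (A ω) (W ω) * (Y ω - QP (A ω) (W ω))) - π₀ (V ω) * mH0 (V ω)) + (-(mHP (V ω) / πP (V ω))) * (Δ ω - π₀ (V ω)) + (-1 : ℝ) * (Hg gP (A ω) (W ω) * (Y ω - QP (A ω) (W ω)) - mH0 (V ω))) := by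
    filter_upwards [hπPne] with ω hp
    field_simp
    ring
  have iL1a : Integrable (fun ω => (Δ ω / πP (V ω)) * (Hg gP (A ω) (W ω) * (Y ω - QP (A ω) (W ω))) - ((Δ ω - πP (V ω)) / πP (V ω)) * mHP (V ω)) μ := hint1.sub hint2
  have iL1b : Integrable (fun ω => (Δ ω / πP (V ω)) * (Hg gP (A ω) (W ω) * (Y ω - QP (A ω) (W ω))) - ((Δ ω - πP (V ω)) / πP (V ω)) * mHP (V ω) - ((πP (V ω) - π₀ (V ω)) / πP (V ω)) * (mHP (V ω) - mH0 (V ω))) μ := iL1a.sub hint9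
  have iL1c : Integrable (fun ω => (Δ ω / πP (V ω)) * (Hg gP (A ω) (W ω) * (Y ω - QP (A ω) (W ω))) - ((Δ ω - πP (V ω)) / πP (V ω)) * mHP (V ω) - ((πP (V ω) - π₀ (V ω)) / πP (V ω)) * (mHP (V ω) - mH0 (V ω)) - (Hg gP (A ω) (W ω) * (Y ω - QP (A ω) (W ω)))) μ := iL1b.sub hint5
  have E1 : ∫ ω, ((Δ ω / πP (V ω)) * (Hg gP (A ω) (W ω) * (Y ω - QP (A ω) (W ω))) - ((Δ ω - πP (V ω)) / πP (V ω)) * mHP (V ω) - ((πP (V ω) - π₀ (V ω)) / πP (V ω)) * (mHP (V ω) - mH0 (V ω)) - (Hg gP (A ω) (W ω) * (Y ω - QP (A ω) (W ω)))) ∂μ = 0 := by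
    rw [integral_congr_ae eG1]
    exact integral_sum3_eq_zero hmV hc11 hc12 hc13 iZ1 iZ2 iZ3 cZ1 cZ2 cZ3 (iL1c.congr eG1)
  rw [integral_sub iL1b hint5, integral_sub iL1a hint9, integral_sub hint1 hint2] at E1
  -- Group 2
  have hc21 : Measurable[MeasurableSpace.comap V inferInstance]
      (fun ω => (π₀ (V ω) - πP (V ω)) / πP (V ω)) := ((hπ₀.sub hπP).div hπP).comp hVm
  have hc20 : Measurable[MeasurableSpace.comap V inferInstance] (fun _ : Ω => (0 : ℝ)) :=
    measurable_const
  have iZ4 : Integrable (fun ω => (Δ ω - π₀ (V ω))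
      * (QP 1 (W ω) - QP 0 (W ω) - (mP1 (V ω) - mP0 (V ω)))) μ := by
    have ibase : Integrable (fun ω => QP 1 (W ω) - QP 0 (W ω) - (mP1 (V ω) - mP0 (V ω))) μ :=
      hint7.sub hint4
    refine Integrable.mono' ibase.abs
      (((hΔ.sub (hπ₀.comp hV)).mul ((hQP1W.sub hQP0W).sub
        ((hmP1.comp hV).sub (hmP0.comp hV)))).aestronglyMeasurable) ?_
    filter_upwards [hπ₀01] with ω h
    have h1 : |Δ ω - π₀ (V ω)| ≤ 1 := by
      rcases hΔ01 ω with hd | hd <;> rw [hd, abs_le] <;>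
        exact ⟨by linarith [h.2], by linarith [h.1]⟩
    rw [Real.norm_eq_abs, abs_mul]
    exact mul_le_of_le_one_left (abs_nonneg _) h1
  have iZ5 : Integrable (fun ω => (QP 1 (W ω) - QP 0 (W ω)) - (m01 (V ω) - m00 (V ω))) μ :=
    hint7.sub id0V
  have iZ0 : Integrable (fun _ : Ω => (0 : ℝ)) μ := integrable_const 0
  have cZ0 : μ[(fun _ : Ω => (0 : ℝ)) | MeasurableSpace.comap V inferInstance] =ᵐ[μ] 0 := by
    rw [show (fun _ : Ω => (0 : ℝ)) = (0 : Ω → ℝ) from rfl, condExp_zero]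
  have eG2 : (fun ω => (Δ ω / πP (V ω)) * (QP 1 (W ω) - QP 0 (W ω) - (mP1 (V ω) - mP0 (V ω))) + (mP1 (V ω) - mP0 (V ω)) - ((πP (V ω) - π₀ (V ω)) / πP (V ω)) * ((mP1 (V ω) - m01 (V ω)) - (mP0 (V ω) - m00 (V ω))) - (QP 1 (W ω) - QP 0 (W ω))) =ᵐ[μ] (fun ω => (1 / πP (V ω)) * ((Δ ω - π₀ (V ω)) * (QP 1 (W ω) - QP 0 (W ω) - (mP1 (V ω) - mP0 (V ω)))) + ((π₀ (V ω) - πP (V ω)) / πP (V ω)) * ((QP 1 (W ω) - QP 0 (W ω)) - (m01 (V ω) - m00 (V ω))) + (0 : ℝ) * (0 : ℝ)) := by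
    filter_upwards [hπPne] with ω hp
    field_simp
    ring
  have iL2a : Integrable (fun ω => (Δ ω / πP (V ω)) * (QP 1 (W ω) - QP 0 (W ω) - (mP1 (V ω) - mP0 (V ω))) + (mP1 (V ω) - mP0 (V ω))) μ := hint3.add hint4
  have iL2b : Integrable (fun ω => (Δ ω / πP (V ω)) * (QP 1 (W ω) - QP 0 (W ω) - (mP1 (V ω) - mP0 (V ω))) + (mP1 (V ω) - mP0 (V ω)) - ((πP (V ω) - π₀ (V ω)) / πP (V ω)) * ((mP1 (V ω) - m01 (V ω)) - (mP0 (V ω) - m00 (V ω)))) μ := iL2a.sub hint12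
  have iL2c : Integrable (fun ω => (Δ ω / πP (V ω)) * (QP 1 (W ω) - QP 0 (W ω) - (mP1 (V ω) - mP0 (V ω))) + (mP1 (V ω) - mP0 (V ω)) - ((πP (V ω) - π₀ (V ω)) / πP (V ω)) * ((mP1 (V ω) - m01 (V ω)) - (mP0 (V ω) - m00 (V ω))) - (QP 1 (W ω) - QP 0 (W ω))) μ := iL2b.sub hint7
  have E2 : ∫ ω, ((Δ ω / πP (V ω)) * (QP 1 (W ω) - QP 0 (W ω) - (mP1 (V ω) - mP0 (V ω))) + (mP1 (V ω) - mP0 (V ω)) - ((πP (V ω) - π₀ (V ω)) / πP (V ω)) * ((mP1 (V ω) - m01 (V ω)) - (mP0 (V ω) - m00 (V ω))) - (QP 1 (W ω) - QP 0 (W ω))) ∂μ = 0 := by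
    rw [integral_congr_ae eG2]
    exact integral_sum3_eq_zero hmV hc11 hc21 hc20 iZ4 iZ5 iZ0 cZ4 cZ5 cZ0 (iL2c.congr eG2)
  rw [integral_sub iL2b hint7, integral_sub iL2a hint12, integral_add hint3 hint4] at E2
  -- Group 3
  have hc31 : Measurable[MeasurableSpace.comap (fun ω => (A ω, W ω)) inferInstance]
      (fun ω => Hg gP (A ω) (W ω)) := hHp.comp hPm
  have hc32 : Measurable[MeasurableSpace.comap W inferInstance]
      (fun ω => -((QP 1 (W ω) - Q₀ 1 (W ω)) / gP (W ω)
        + (QP 0 (W ω) - Q₀ 0 (W ω)) / (1 - gP (W ω)))) :=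
    ((((hQP1.sub hQ01).div hgP).add
      ((hQP0.sub hQ00).div (measurable_const.sub hgP))).neg).comp hWm
  have iZε : Integrable (fun ω => Y ω - Q₀ (A ω) (W ω)) μ := hY.sub iQa
  have cZε : μ[(fun ω => Y ω - Q₀ (A ω) (W ω))
        | MeasurableSpace.comap (fun ω => (A ω, W ω)) inferInstance] =ᵐ[μ] 0 :=
    condExp_diff_zero hm2 hY iQa hQam2.stronglyMeasurable hQ₀ver
  have iZA : Integrable (fun ω => A ω - g₀ (W ω)) μ := iA.sub ig₀W
  have cZA : μ[(fun ω => A ω - g₀ (W ω)) | MeasurableSpace.comap W inferInstance] =ᵐ[μ] 0 :=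
    condExp_diff_zero hmW iA ig₀W ((hg₀.comp hWm).stronglyMeasurable) hg₀ver
  have eG3 : ∀ ω, Hg gP (A ω) (W ω) * (Y ω - QP (A ω) (W ω)) + (QP 1 (W ω) - QP 0 (W ω)) - (Q₀ 1 (W ω) - Q₀ 0 (W ω)) - (((gP (W ω) - g₀ (W ω)) / gP (W ω)) * (QP 1 (W ω) - Q₀ 1 (W ω)) + ((gP (W ω) - g₀ (W ω)) / (1 - gP (W ω))) * (QP 0 (W ω) - Q₀ 0 (W ω))) = Hg gP (A ω) (W ω) * (Y ω - Q₀ (A ω) (W ω)) + (-((QP 1 (W ω) - Q₀ 1 (W ω)) / gP (W ω) + (QP 0 (W ω) - Q₀ 0 (W ω)) / (1 - gP (W ω)))) * (A ω - g₀ (W ω)) := by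
    intro ω
    have hg1 : gP (W ω) ≠ 0 := (hgPbd (W ω)).1.ne'
    have hg2 : (1 : ℝ) - gP (W ω) ≠ 0 := ne_of_gt (by linarith [(hgPbd (W ω)).2])
    rcases hA01 ω with h | h <;> simp only [h, Hg] <;> field_simp <;> ring
  have i1011 : Integrable (fun ω => ((gP (W ω) - g₀ (W ω)) / gP (W ω)) * (QP 1 (W ω) - Q₀ 1 (W ω)) + ((gP (W ω) - g₀ (W ω)) / (1 - gP (W ω))) * (QP 0 (W ω) - Q₀ 0 (W ω))) μ := hint10.add hint11
  have iL3a : Integrable (fun ω => Hg gP (A ω) (W ω) * (Y ω - QP (A ω) (W ω)) + (QP 1 (W ω) - QP 0 (W ω))) μ := hint5.add hint7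
  have iL3b : Integrable (fun ω => Hg gP (A ω) (W ω) * (Y ω - QP (A ω) (W ω)) + (QP 1 (W ω) - QP 0 (W ω)) - (Q₀ 1 (W ω) - Q₀ 0 (W ω))) μ := iL3a.sub hint6
  have iL3c : Integrable (fun ω => Hg gP (A ω) (W ω) * (Y ω - QP (A ω) (W ω)) + (QP 1 (W ω) - QP 0 (W ω)) - (Q₀ 1 (W ω) - Q₀ 0 (W ω)) - (((gP (W ω) - g₀ (W ω)) / gP (W ω)) * (QP 1 (W ω) - Q₀ 1 (W ω)) + ((gP (W ω) - g₀ (W ω)) / (1 - gP (W ω))) * (QP 0 (W ω) - Q₀ 0 (W ω)))) μ := iL3b.sub i1011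
  have E3 : ∫ ω, (Hg gP (A ω) (W ω) * (Y ω - QP (A ω) (W ω)) + (QP 1 (W ω) - QP 0 (W ω)) - (Q₀ 1 (W ω) - Q₀ 0 (W ω)) - (((gP (W ω) - g₀ (W ω)) / gP (W ω)) * (QP 1 (W ω) - Q₀ 1 (W ω)) + ((gP (W ω) - g₀ (W ω)) / (1 - gP (W ω))) * (QP 0 (W ω) - Q₀ 0 (W ω)))) ∂μ = 0 := by
    rw [integral_congr_ae (Filter.Eventually.of_forall eG3)]
    exact integral_sum2_nested_eq_zero hm2 hW2 hc31 hc32 iZε iZA cZε cZA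
      (iL3c.congr (Filter.Eventually.of_forall eG3))
  rw [integral_sub iL3b i1011, integral_sub iL3a hint6, integral_add hint5 hint7] at E3
  -- final assembly
  have iG0a : Integrable (fun ω => (Δ ω / πP (V ω)) * (Hg gP (A ω) (W ω) * (Y ω - QP (A ω) (W ω))) - ((Δ ω - πP (V ω)) / πP (V ω)) * mHP (V ω)) μ := hint1.sub hint2
  have iG0b : Integrable (fun ω => (Δ ω / πP (V ω)) * (Hg gP (A ω) (W ω) * (Y ω - QP (A ω) (W ω))) - ((Δ ω - πP (V ω)) / πP (V ω)) * mHP (V ω) + (Δ ω / πP (V ω)) * (QP 1 (W ω) - QP 0 (W ω) - (mP1 (V ω) - mP0 (V ω)))) μ := iG0a.add hint3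
  rw [integral_add iG0b hint4, integral_add iG0a hint3, integral_sub hint1 hint2]
  linarith [E1, E2, E3]

end Main
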